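/- For ω = y dx − λ x dy with λ ∈ ℂ \ ℚ₊ nonzero (a reduced linear singularity), any irreducible formal curve {h=0} invariant by ω is, up to a unit, equal to x or y. In particular the set of separatrices of ω at the origin consists exactly of the two curves {x=0} and {y=0}. -/

import Mathlib

noncomputable def ord (f : MvPowerSeries (Fin 2) ℂ) : ℕ :=
  sInf {n | ∃ d : Fin 2 →₀ ℕ, d 0 + d 1 = n ∧ MvPowerSeries.coeff d f ≠ 0}

noncomputable def pull (f : MvPowerSeries (Fin 2) ℂ) : MvPowerSeries (Fin 2) ℂ :=
  fun d => if d 1 ≤ d 0 then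
    MvPowerSeries.coeff (Finsupp.single 0 (d 0 - d 1) + Finsupp.single 1 (d 1)) f
  else 0

noncomputable def homPart (n : ℕ) (f : MvPowerSeries (Fin 2) ℂ) : MvPowerSeries (Fin 2) ℂ :=
  fun d => if d 0 + d 1 = n then MvPowerSeries.coeff d f else 0

noncomputable def xord (h : MvPowerSeries (Fin 2) ℂ) : ℕ :=
  sSup {k | (MvPowerSeries.X 0 : MvPowerSeries (Fin 2) ℂ) ^ k ∣ h}

noncomputable def pd (i : Fin 2) (f : MvPowerSeries (Fin 2) ℂ) : MvPowerSeries (Fin 2) ℂ :=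
  fun d => ((d i : ℕ) + 1 : ℂ) * MvPowerSeries.coeff (d + Finsupp.single i 1) f

noncomputable def evalY0 (f : MvPowerSeries (Fin 2) ℂ) : PowerSeries ℂ :=
  PowerSeries.mk fun n => MvPowerSeries.coeff (Finsupp.single 0 n) f

open MvPowerSeries in
lemma coeff_X_mul_pd (i : Fin 2) (h : MvPowerSeries (Fin 2) ℂ) (d : Fin 2 →₀ ℕ) :
    MvPowerSeries.coeff d (MvPowerSeries.X i * pd i h)
      = (d i : ℂ) * MvPowerSeries.coeff d h := by
  classical
  rw [show (X i : MvPowerSeries (Fin 2) ℂ) = monomial (Finsupp.single i 1) 1 from rfl,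
    coeff_monomial_mul]
  split_ifs with hle
  · have hd : 1 ≤ d i := Finsupp.single_le_iff.mp hle
    have e2 : (d - Finsupp.single i 1) + Finsupp.single i 1 = d := tsub_add_cancel_of_le hle
    have e1 : ((d - Finsupp.single i 1 : Fin 2 →₀ ℕ)) i = d i - 1 := by
      simp [Finsupp.tsub_apply]
    rw [one_mul, show coeff (d - Finsupp.single i 1) (pd i h)
        = ((((d - Finsupp.single i 1 : Fin 2 →₀ ℕ)) i : ℕ) + 1 : ℂ)
          * coeff ((d - Finsupp.single i 1) + Finsupp.single i 1) h from rfl, e1, e2]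
    congr 1
    have : ((d i - 1 : ℕ) : ℂ) + 1 = ((d i - 1 + 1 : ℕ) : ℂ) := by push_cast; ring
    rw [this, Nat.sub_add_cancel hd]
  · have : d i = 0 := by
      by_contra hne
      exact hle (Finsupp.single_le_iff.mpr (Nat.one_le_iff_ne_zero.mpr hne))
    simp [this]

lemma fin2_ext {p d : Fin 2 →₀ ℕ} (h0 : p 0 = d 0) (h1 : p 1 = d 1) : p = d := by
  ext i
  revert i
  rw [Fin.forall_fin_two]
  exact ⟨h0, h1⟩

open MvPowerSeries in
theorem linear_reduced_separatrices_are_axes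
    (lam : ℂ) (h0 : lam ≠ 0) (hq : ∀ q : ℚ, 0 < q → (q : ℂ) ≠ lam)
    (h : MvPowerSeries (Fin 2) ℂ) (hirr : Irreducible h)
    (hinv : ∃ k : MvPowerSeries (Fin 2) ℂ,
      X 1 * pd 1 h + (C lam : MvPowerSeries (Fin 2) ℂ) * X 0 * pd 0 h = h * k) :
    ∃ u : (MvPowerSeries (Fin 2) ℂ)ˣ,
      h = (u : MvPowerSeries (Fin 2) ℂ) * X 0 ∨
      h = (u : MvPowerSeries (Fin 2) ℂ) * X 1 := by
  classical
  obtain ⟨k, hk⟩ := hinv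
  have hne : h ≠ 0 := hirr.ne_zero
  set k0 : ℂ := MvPowerSeries.coeff 0 k with hk0
  -- coefficientwise equation
  have key : ∀ d : Fin 2 →₀ ℕ,
      ((d 1 : ℂ) + lam * (d 0 : ℂ)) * MvPowerSeries.coeff d h
        = ∑ p ∈ Finset.HasAntidiagonal.antidiagonal d,
            MvPowerSeries.coeff p.1 h * MvPowerSeries.coeff p.2 k := by
    intro d
    have hc := congrArg (MvPowerSeries.coeff d) hk
    rw [map_add, mul_assoc (C lam : MvPowerSeries (Fin 2) ℂ), coeff_C_mul, coeff_X_mul_pd, coeff_X_mul_pd,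
      coeff_mul] at hc
    rw [← hc]; ring
  -- nonzero coefficient exists
  have hex : ∃ d : Fin 2 →₀ ℕ, MvPowerSeries.coeff d h ≠ 0 := by
    by_contra hall
    push_neg at hall
    exact hne (MvPowerSeries.ext fun d => by rw [hall d, map_zero])
  set S : Set ℕ := {n | ∃ d : Fin 2 →₀ ℕ, d 0 + d 1 = n ∧ MvPowerSeries.coeff d h ≠ 0} with hS
  have hSne : S.Nonempty := by
    obtain ⟨d, hd⟩ := hex
    exact ⟨d 0 + d 1, d, rfl, hd⟩
  set N : ℕ := sInf S with hN
  obtain ⟨dstar, hdsdeg, hdsne⟩ : N ∈ S := Nat.sInf_mem hSne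
  have hmin : ∀ d : Fin 2 →₀ ℕ, d 0 + d 1 < N → MvPowerSeries.coeff d h = 0 := by
    intro d hd
    by_contra hc
    have hle : N ≤ d 0 + d 1 := Nat.sInf_le (show d 0 + d 1 ∈ S from ⟨d, rfl, hc⟩)
    omega
  -- strict degree drop for proper subindices
  have hlt : ∀ p d : Fin 2 →₀ ℕ, p ≤ d → p ≠ d → p 0 + p 1 < d 0 + d 1 := by
    intro p d hle hpd
    have h0' : p 0 ≤ d 0 := hle 0
    have h1' : p 1 ≤ d 1 := hle 1
    by_contra hc
    exact hpd (fin2_ext (by omega) (by omega))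
  -- the antidiagonal sum reduction
  have hsum : ∀ d : Fin 2 →₀ ℕ,
      (∀ p : Fin 2 →₀ ℕ, p ≤ d → p ≠ d → MvPowerSeries.coeff p h = 0) →
      ∑ p ∈ Finset.HasAntidiagonal.antidiagonal d,
          MvPowerSeries.coeff p.1 h * MvPowerSeries.coeff p.2 k
        = MvPowerSeries.coeff d h * k0 := by
    intro d hvan
    rw [Finset.sum_eq_single_of_mem (d, (0 : Fin 2 →₀ ℕ))
      (Finset.HasAntidiagonal.mem_antidiagonal.mpr (add_zero d))]
    intro p hp hpne
    rw [Finset.HasAntidiagonal.mem_antidiagonal] at hp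
    have hple : p.1 ≤ d := hp ▸ self_le_add_right p.1 p.2
    by_cases hfst : p.1 = d
    · exfalso
      apply hpne
      have : p.2 = 0 := by
        have h2 := hp
        rw [hfst] at h2
        have h3 : d + p.2 = d + 0 := by rw [add_zero]; exact h2
        exact add_left_cancel h3
      exact Prod.ext hfst this
    · rw [hvan p.1 hple hfst, zero_mul]
  -- eigenvalue equation at minimal degree
  have hmineq : ∀ d : Fin 2 →₀ ℕ, d 0 + d 1 = N → MvPowerSeries.coeff d h ≠ 0 →
      (d 1 : ℂ) + lam * (d 0 : ℂ) = k0 := by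
    intro d hdeg hdne
    have := key d
    rw [hsum d (fun p hple hpne => hmin p (by have := hlt p d hple hpne; omega))] at this
    have h2 : ((d 1 : ℂ) + lam * (d 0 : ℂ)) * MvPowerSeries.coeff d h
        = k0 * MvPowerSeries.coeff d h := by rw [this]; ring
    exact mul_right_cancel₀ hdne h2
  set a : ℕ := dstar 0 with ha
  set b : ℕ := dstar 1 with hb
  have hlam1 : lam ≠ 1 := fun hcon => hq 1 one_pos (by rw [hcon]; norm_num)
  -- uniqueness at minimal degree
  have huniq : ∀ d : Fin 2 →₀ ℕ, d 0 + d 1 = N → MvPowerSeries.coeff d h ≠ 0 → d = dstar := by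
    intro d hdeg hdne
    have e1 := hmineq d hdeg hdne
    have e2 := hmineq dstar hdsdeg hdsne
    have e3 : (d 1 : ℂ) + lam * (d 0 : ℂ) = (b : ℂ) + lam * (a : ℂ) := by rw [e1, e2]
    have e4 : (d 0 : ℂ) + (d 1 : ℂ) = (a : ℂ) + (b : ℂ) := by
      have : ((d 0 + d 1 : ℕ) : ℂ) = ((a + b : ℕ) : ℂ) := by rw [hdeg, ← hdsdeg]
      push_cast at this; exact this
    have e5 : ((d 0 : ℂ) - (a : ℂ)) * (lam - 1) = 0 := by
      have : lam * ((d 0 : ℂ) - a) = (b : ℂ) - d 1 := by linear_combination e3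
      have h2 : (d 0 : ℂ) - a = (b : ℂ) - d 1 := by linear_combination e4
      linear_combination this - h2
    have e6 : (d 0 : ℂ) = (a : ℂ) := by
      rcases mul_eq_zero.mp e5 with hc | hc
      · linear_combination hc
      · exact absurd (by linear_combination hc) hlam1
    have e7 : d 0 = a := Nat.cast_injective e6
    exact fin2_ext e7 (by omega)
  -- main claim by strong induction: all nonzero coefficients lie above (a, b)
  have claim : ∀ n : ℕ, ∀ d : Fin 2 →₀ ℕ, d 0 + d 1 = n → MvPowerSeries.coeff d h ≠ 0 →
      a ≤ d 0 ∧ b ≤ d 1 := by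
    intro n
    induction n using Nat.strong_induction_on with
    | _ n IH =>
      intro d hdeg hdne
      rcases lt_trichotomy n N with hlt' | heq | hgt
      · exact absurd (hmin d (by omega)) hdne
      · have hd' := huniq d (by omega) hdne
        rw [hd']
        exact ⟨le_refl _, le_refl _⟩
      · by_contra hcon
        have hvan : ∀ p : Fin 2 →₀ ℕ, p ≤ d → p ≠ d → MvPowerSeries.coeff p h = 0 := by
          intro p hple hpne
          by_contra hpc
          have hplt := hlt p d hple hpne
          obtain ⟨hpa, hpb⟩ := IH (p 0 + p 1) (by omega) p rfl hpc
          exact hcon ⟨le_trans hpa (hple 0), le_trans hpb (hple 1)⟩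
        have heig := key d
        rw [hsum d hvan] at heig
        have hk0v : k0 = (b : ℂ) + lam * (a : ℂ) := (hmineq dstar hdsdeg hdsne).symm
        have hfac : ((d 1 : ℂ) + lam * (d 0 : ℂ) - k0) * MvPowerSeries.coeff d h = 0 := by
          linear_combination heig
        have hnz : ((d 1 : ℂ) + lam * (d 0 : ℂ) - k0) ≠ 0 := by
          rw [hk0v]
          intro hzero
          rcases Nat.lt_trichotomy (d 0) a with hda | hda | hda
          · -- d0 < a forces d1 > b
            have hd1b : b < d 1 := by omega
            have hden : ((a : ℂ) - (d 0 : ℂ)) ≠ 0 := by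
              rw [sub_ne_zero]
              exact fun hc => (by omega : a ≠ d 0) (by exact_mod_cast hc)
            refine hq (((d 1 : ℚ) - (b : ℚ)) / ((a : ℚ) - (d 0 : ℚ))) ?_ ?_
            · apply div_pos
              · rw [sub_pos]; exact_mod_cast hd1b
              · rw [sub_pos]; exact_mod_cast hda
            · have hlameq : lam = ((d 1 : ℂ) - (b : ℂ)) / ((a : ℂ) - (d 0 : ℂ)) := by
                rw [eq_div_iff hden]
                linear_combination -hzero
              rw [hlameq]
              push_cast
              ring
          · -- d0 = a forces d1 = b, contradicting n > N
            have hca : (d 0 : ℂ) = (a : ℂ) := by exact_mod_cast hda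
            have hcb : (d 1 : ℂ) = (b : ℂ) := by linear_combination hzero - lam * hca
            have : d 1 = b := by exact_mod_cast hcb
            omega
          · -- d0 > a forces d1 < b
            have hd1b : d 1 < b := by
              by_contra hc
              exact hcon ⟨by omega, by omega⟩
            have hden : ((d 0 : ℂ) - (a : ℂ)) ≠ 0 := by
              rw [sub_ne_zero]
              exact fun hc => (by omega : d 0 ≠ a) (by exact_mod_cast hc)
            refine hq (((b : ℚ) - (d 1 : ℚ)) / ((d 0 : ℚ) - (a : ℚ))) ?_ ?_
            · apply div_pos
              · rw [sub_pos]; exact_mod_cast hd1b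
              · rw [sub_pos]; exact_mod_cast hda
            · have hlameq : lam = ((b : ℂ) - (d 1 : ℂ)) / ((d 0 : ℂ) - (a : ℂ)) := by
                rw [eq_div_iff hden]
                linear_combination hzero
              rw [hlameq]
              push_cast
              ring
        exact hdne ((mul_eq_zero.mp hfac).resolve_left hnz)
  -- factor h = monomial D 1 * w with w a unit
  set D : Fin 2 →₀ ℕ := Finsupp.single 0 a + Finsupp.single 1 b with hD
  have hD0 : D 0 = a := by simp [hD, Finsupp.single_apply]
  have hD1 : D 1 = b := by simp [hD, Finsupp.single_apply]
  have hDds : D = dstar := fin2_ext (by rw [hD0]) (by rw [hD1])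
  have claim' : ∀ d : Fin 2 →₀ ℕ, MvPowerSeries.coeff d h ≠ 0 → D ≤ d := by
    intro d hd
    obtain ⟨h1', h2'⟩ := claim (d 0 + d 1) d rfl hd
    refine (Finsupp.le_iff D d).mpr ?_
    intro i _
    revert i
    rw [Fin.forall_fin_two]
    exact ⟨fun _ => by rw [hD0]; exact h1', fun _ => by rw [hD1]; exact h2'⟩
  set w : MvPowerSeries (Fin 2) ℂ := fun e => MvPowerSeries.coeff (e + D) h with hw
  have hwcoeff : ∀ e, MvPowerSeries.coeff e w = MvPowerSeries.coeff (e + D) h :=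
    fun e => rfl
  have hfact : h = monomial D 1 * w := by
    apply MvPowerSeries.ext
    intro d
    rw [coeff_monomial_mul]
    split_ifs with hle
    · rw [one_mul, hwcoeff, tsub_add_cancel_of_le hle]
    · by_contra hc
      exact hle (claim' d hc)
  have hwunit : IsUnit w := by
    rw [MvPowerSeries.isUnit_iff_constantCoeff, isUnit_iff_ne_zero,
      ← MvPowerSeries.coeff_zero_eq_constantCoeff_apply, hwcoeff, zero_add, hDds]
    exact hdsne
  have nofac : ∀ E F : Fin 2 →₀ ℕ, E ≠ 0 → F ≠ 0 → D ≠ E + F := by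
    intro E F hE hF hDEF
    have hfac2 : h = monomial E 1 * (monomial F 1 * w) := by
      rw [hfact, hDEF, ← mul_assoc, monomial_mul_monomial, mul_one]
    rcases hirr.2 hfac2 with hu | hu
    · rw [MvPowerSeries.isUnit_iff_constantCoeff,
        ← MvPowerSeries.coeff_zero_eq_constantCoeff_apply, coeff_monomial,
        if_neg (fun hc => hE hc.symm)] at hu
      exact hu.ne_zero rfl
    · rw [MvPowerSeries.isUnit_iff_constantCoeff,
        ← MvPowerSeries.coeff_zero_eq_constantCoeff_apply, coeff_monomial_mul,
        if_neg (fun hc => hF (le_antisymm hc (zero_le (a := F))))] at hu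
      exact hu.ne_zero rfl
  have hD0ne : ¬ (a = 0 ∧ b = 0) := by
    rintro ⟨ha0, hb0⟩
    apply hirr.1
    have hDz : D = 0 := by rw [hD, ha0, hb0]; simp
    rw [hfact, hDz, monomial_zero_one, one_mul]
    exact hwunit
  have hane : ¬ (1 ≤ a ∧ 1 ≤ b) := by
    rintro ⟨ha1, hb1⟩
    exact nofac (Finsupp.single 0 a) (Finsupp.single 1 b)
      (fun hc => (by omega : a ≠ 0) (Finsupp.single_eq_zero.mp hc))
      (fun hc => (by omega : b ≠ 0) (Finsupp.single_eq_zero.mp hc)) hD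
  have ha2 : ¬ (2 ≤ a ∧ b = 0) := by
    rintro ⟨ha1, hb0⟩
    refine nofac (Finsupp.single 0 1) (Finsupp.single 0 (a - 1))
      (fun hc => one_ne_zero (Finsupp.single_eq_zero.mp hc))
      (fun hc => (by omega : a - 1 ≠ 0) (Finsupp.single_eq_zero.mp hc)) ?_
    rw [hD, hb0, Finsupp.single_zero, add_zero, ← Finsupp.single_add]
    congr 1
    omega
  have hb2 : ¬ (a = 0 ∧ 2 ≤ b) := by
    rintro ⟨ha0, hb1⟩
    refine nofac (Finsupp.single 1 1) (Finsupp.single 1 (b - 1))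
      (fun hc => one_ne_zero (Finsupp.single_eq_zero.mp hc))
      (fun hc => (by omega : b - 1 ≠ 0) (Finsupp.single_eq_zero.mp hc)) ?_
    rw [hD, ha0, Finsupp.single_zero, zero_add, ← Finsupp.single_add]
    congr 1
    omega
  have hcases : (a = 1 ∧ b = 0) ∨ (a = 0 ∧ b = 1) := by omega
  obtain ⟨u, hu⟩ := hwunit
  rcases hcases with ⟨ha1, hb0⟩ | ⟨ha0, hb1⟩
  · refine ⟨u, Or.inl ?_⟩
    have hX : monomial D 1 = (X 0 : MvPowerSeries (Fin 2) ℂ) := by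
      rw [hD, ha1, hb0, Finsupp.single_zero, add_zero]; rfl
    rw [hfact, hX, ← hu, mul_comm]
  · refine ⟨u, Or.inr ?_⟩
    have hX : monomial D 1 = (X 1 : MvPowerSeries (Fin 2) ℂ) := by
      rw [hD, ha0, hb1, Finsupp.single_zero, zero_add]; rfl
    rw [hfact, hX, ← hu, mul_comm]
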